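/- The map sending a maximal chain X of Q, with source s and sink t, to the one-dimensional subspace of A spanned by the path a_{ts}, is a bijection between the set of maximal chains of Q and the set of simple sub-bimodules of the A-A-bimodule A (equivalently, the minimal nonzero two-sided ideals of A); these are exactly the simple sub-bimodules in the socle of the bimodule A. -/

import Mathlib

set_option maxHeartbeats 1000000
set_option synthInstance.maxHeartbeats 400000

namespace DPF

open Matrix

/-- A finite quiver on `Fin n` (given by an arrow relation, no loops, no two-cycles)
whose underlying (undirected simple) graph is a tree. -/
structure TreeQuiver (n : ℕ) : Type where
  arr : Fin n → Fin n → Prop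
  loopless : ∀ i, ¬ arr i i
  oneway : ∀ i j, arr i j → ¬ arr j i
  isTree : (SimpleGraph.fromRel arr).IsTree

namespace TreeQuiver

variable {n : ℕ}

/-- The underlying simple graph of the quiver. -/
def G (Q : TreeQuiver n) : SimpleGraph (Fin n) := SimpleGraph.fromRel Q.arr

/-- `Q.Reach i j` : `j` is a successor of `i`, i.e. there is an oriented
(possibly trivial) path from `i` to `j`. -/
def Reach (Q : TreeQuiver n) (i j : Fin n) : Prop := Relation.ReflTransGen Q.arr i j

/-- `i` is a sink (no outgoing arrows). -/
def IsSink (Q : TreeQuiver n) (i : Fin n) : Prop := ∀ j, ¬ Q.arr i j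

/-- `i` is a source (no incoming arrows). -/
def IsSource (Q : TreeQuiver n) (i : Fin n) : Prop := ∀ j, ¬ Q.arr j i

/-- The degree of a vertex in the underlying graph. -/
noncomputable def deg (Q : TreeQuiver n) (i : Fin n) : ℕ := {j | Q.G.Adj i j}.ncard

/-- `i ∈ K(Q)`: `i` is a sink or a source. -/
def inK (Q : TreeQuiver n) (i : Fin n) : Prop := Q.IsSink i ∨ Q.IsSource i

/-- `i ∈ K'(Q)`: a sink or a source of degree at least 2. -/
def inK' (Q : TreeQuiver n) (i : Fin n) : Prop := Q.inK i ∧ 2 ≤ Q.deg i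

/-- `Q` is admissible: all vertices of degree at least 3 are sinks or sources. -/
def Admissible (Q : TreeQuiver n) : Prop := ∀ i, 3 ≤ Q.deg i → Q.inK i

/-- A maximal chain of `Q` is (the oriented path between) a pair `(s, t)` where `s` is a
source, `t` is a sink, and `t` is reachable from `s`. -/
def IsMaxChain (Q : TreeQuiver n) (s t : Fin n) : Prop :=
  Q.IsSource s ∧ Q.IsSink t ∧ Q.Reach s t

/-- The vertex set of a chain from `s` to `t`. -/
def chainSet (Q : TreeQuiver n) (s t : Fin n) : Set (Fin n) := {v | Q.Reach s v ∧ Q.Reach v t}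

/-- The vertex set of the union of a collection `S` of (maximal) chains, i.e. of the
corresponding "support" subgraph. -/
def suppVerts (Q : TreeQuiver n) (S : Set (Fin n × Fin n)) : Set (Fin n) :=
  {v | ∃ c ∈ S, v ∈ Q.chainSet c.1 c.2}

/-- The adjacency relation of the subgraph given by the union of the chains in `S`. -/
def suppAdj (Q : TreeQuiver n) (S : Set (Fin n × Fin n)) (i j : Fin n) : Prop :=
  Q.G.Adj i j ∧ ∃ c ∈ S, i ∈ Q.chainSet c.1 c.2 ∧ j ∈ Q.chainSet c.1 c.2

/-- The degree of a vertex in the subgraph given by the union of the chains in `S`. -/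
noncomputable def suppDeg (Q : TreeQuiver n) (S : Set (Fin n × Fin n)) (i : Fin n) : ℕ :=
  {j | Q.suppAdj S i j}.ncard

/-- The subgraph given by the union of the chains in `S` is connected. -/
def SuppConnected (Q : TreeQuiver n) (S : Set (Fin n × Fin n)) : Prop :=
  ∀ u ∈ Q.suppVerts S, ∀ v ∈ Q.suppVerts S, Relation.ReflTransGen (Q.suppAdj S) u v

/-- The two unions of (maximal) chains `S`, `T` are equal as subgraphs of `Q`. -/
def SuppEq (Q : TreeQuiver n) (S T : Set (Fin n × Fin n)) : Prop :=
  Q.suppVerts S = Q.suppVerts T ∧ ∀ i j, Q.suppAdj S i j ↔ Q.suppAdj T i j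

/-- A path function: `α i` is a successor of `i` or `0` (here: `none`). -/
def IsPathFun (Q : TreeQuiver n) (α : Fin n → Option (Fin n)) : Prop :=
  ∀ i j, α i = some j → Q.Reach i j

/-- Monotonicity of a path function. -/
def MonotoneFun (Q : TreeQuiver n) (α : Fin n → Option (Fin n)) : Prop :=
  ∀ i j x, Q.Reach j i → α i = some x → ∃ y, α j = some y ∧ Q.Reach y x

/-- The support of a function `α : Q₀ → Q₀ ∪ {0}`: the set of maximal chains containing
some value of `α`. -/
def suppF (Q : TreeQuiver n) (α : Fin n → Option (Fin n)) : Set (Fin n × Fin n) :=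
  {c | Q.IsMaxChain c.1 c.2 ∧ ∃ i x, α i = some x ∧ x ∈ Q.chainSet c.1 c.2}

/-- A special function: a monotone path function with connected support such that any
sink-or-source vertex of the support sent to `0` has degree `1` in the support. -/
def SpecialFun (Q : TreeQuiver n) (α : Fin n → Option (Fin n)) : Prop :=
  Q.IsPathFun α ∧ Q.MonotoneFun α ∧ Q.SuppConnected (Q.suppF α) ∧
    ∀ i, Q.inK i → i ∈ Q.suppVerts (Q.suppF α) → α i = none → Q.suppDeg (Q.suppF α) i = 1

/-- `Q.Gamma s t`: the vertex set of the connected component of `t` in the graph obtained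
from `Q` by deleting the vertex `s`. -/
def Gamma (Q : TreeQuiver n) (s t : Fin n) : Set (Fin n) :=
  {v | Relation.ReflTransGen (fun a b => Q.G.Adj a b ∧ a ≠ s ∧ b ≠ s) t v}

end TreeQuiver

open TreeQuiver

section Algebra

variable {n : ℕ} (Q : TreeQuiver n) (k : Type) [Field k]

/-- The path algebra of the tree quiver `Q` over `k`, realized concretely as the
subalgebra of `Matrix (Fin n) (Fin n) k` of matrices supported on the reachability
relation; the matrix unit in position `(j, i)` corresponds to the unique path
`a_{ji}` from `i` to `j`. -/
def pathAlg : Subalgebra k (Matrix (Fin n) (Fin n) k) where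
  carrier := {x | ∀ i j, ¬ Q.Reach j i → x i j = 0}
  mul_mem' := by
    intro x y hx hy i j hij
    rw [Matrix.mul_apply]
    refine Finset.sum_eq_zero fun m _ => ?_
    by_cases h1 : Q.Reach m i
    · have h2 : ¬ Q.Reach j m := fun h2 => hij (Relation.ReflTransGen.trans h2 h1)
      rw [hy m j h2, mul_zero]
    · rw [hx i m h1, zero_mul]
  one_mem' := by
    intro i j hij
    have hne : i ≠ j := by rintro rfl; exact hij Relation.ReflTransGen.refl
    exact Matrix.one_apply_ne hne
  add_mem' := by
    intro x y hx hy i j hij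
    simp only [Matrix.add_apply, hx i j hij, hy i j hij, add_zero]
  zero_mem' := by intro i j hij; rfl
  algebraMap_mem' := by
    intro r i j hij
    have hne : i ≠ j := by rintro rfl; exact hij Relation.ReflTransGen.refl
    simp [Matrix.algebraMap_matrix_apply, hne]

theorem std_mem (t s : Fin n) (h : Q.Reach s t) :
    Matrix.single t s (1 : k) ∈ pathAlg Q k := by
  intro i j hij
  by_cases h1 : t = i ∧ s = j
  · obtain ⟨rfl, rfl⟩ := h1
    exact absurd h hij
  · simp only [Matrix.single, Matrix.of_apply, if_neg h1]

/-- The path `a_{ts}` from `s` to `t`, as an element of the path algebra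
(by convention `0` if `t` is not a successor of `s`). -/
noncomputable def aEl (t s : Fin n) : pathAlg Q k :=
  haveI := Classical.dec (Q.Reach s t)
  if h : Q.Reach s t then ⟨Matrix.single t s 1, std_mem Q k t s h⟩ else 0

/-- The trivial path `e_i` at the vertex `i`. -/
noncomputable def e (i : Fin n) : pathAlg Q k :=
  ⟨Matrix.single i i 1, std_mem Q k i i Relation.ReflTransGen.refl⟩

/-- `B` is a two-sided ideal of the path algebra, i.e. a sub-bimodule of the regular
`A`-`A`-bimodule `A`. -/
def IsIdeal (B : Submodule k ↥(pathAlg Q k)) : Prop :=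
  (∀ a : ↥(pathAlg Q k), ∀ x ∈ B, a * x ∈ B) ∧ (∀ a : ↥(pathAlg Q k), ∀ x ∈ B, x * a ∈ B)

/-- `B` is an indecomposable sub-bimodule of `A`: a nonzero two-sided ideal which does not
decompose as an (internal) direct sum of two nonzero sub-bimodules. -/
def Indec (B : Submodule k ↥(pathAlg Q k)) : Prop :=
  IsIdeal Q k B ∧ B ≠ ⊥ ∧
    ∀ B1 B2 : Submodule k ↥(pathAlg Q k), IsIdeal Q k B1 → IsIdeal Q k B2 →
      B1 ⊔ B2 = B → B1 ⊓ B2 = ⊥ → B1 = ⊥ ∨ B2 = ⊥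

/-- The support of a two-sided ideal `B`: the set of maximal chains `(s, t)` of `Q`
such that `a_{ts} ∈ B`. -/
def suppB (B : Submodule k ↥(pathAlg Q k)) : Set (Fin n × Fin n) :=
  {c | Q.IsMaxChain c.1 c.2 ∧ aEl Q k c.2 c.1 ∈ B}

/-- The indecomposable projective left module `P_j = A e_j`, as a left ideal of `A`. -/
def Pmod (j : Fin n) : Submodule ↥(pathAlg Q k) ↥(pathAlg Q k) where
  carrier := {x | x * e Q k j = x}
  add_mem' := by
    intro a b ha hb
    show (a + b) * e Q k j = a + b
    rw [add_mul]
    rw [show a * e Q k j = a from ha, show b * e Q k j = b from hb]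
  zero_mem' := by
    show (0 : ↥(pathAlg Q k)) * e Q k j = 0
    rw [zero_mul]
  smul_mem' := by
    intro c x hx
    show (c • x) * e Q k j = c • x
    rw [smul_eq_mul, mul_assoc, show x * e Q k j = x from hx]

/-- `B e_i`, as a left ideal (left `A`-submodule) of `A`; here `B` is a two-sided ideal. -/
def BeiL (B : Submodule k ↥(pathAlg Q k)) (hB : IsIdeal Q k B) (i : Fin n) :
    Submodule ↥(pathAlg Q k) ↥(pathAlg Q k) where
  carrier := {x | x ∈ B ∧ x * e Q k i = x}
  add_mem' := by
    intro a b ha hb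
    exact ⟨B.add_mem ha.1 hb.1, by rw [add_mul, ha.2, hb.2]⟩
  zero_mem' := ⟨B.zero_mem, by rw [zero_mul]⟩
  smul_mem' := by
    intro c x hx
    refine ⟨?_, ?_⟩
    · show c * x ∈ B
      exact hB.1 c x hx.1
    · show (c • x) * e Q k i = c • x
      rw [smul_eq_mul, mul_assoc, hx.2]

/-- A left `A`-submodule `N` of `A` is (zero or) indecomposable. -/
def IndecL (N : Submodule ↥(pathAlg Q k) ↥(pathAlg Q k)) : Prop :=
  N ≠ ⊥ ∧ ∀ N1 N2 : Submodule ↥(pathAlg Q k) ↥(pathAlg Q k),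
    N1 ⊔ N2 = N → N1 ⊓ N2 = ⊥ → N1 = ⊥ ∨ N2 = ⊥

/-- `x` is "the" function `x_B` associated to the indecomposable sub-bimodule `B`:
`x i = none` iff `B e_i = 0`, and `x i = some j` implies `B e_i ≅ P_j` as left `A`-modules. -/
def IsXB (B : Submodule k ↥(pathAlg Q k)) (hB : IsIdeal Q k B) (x : Fin n → Option (Fin n)) :
    Prop :=
  ∀ i, (x i = none ↔ BeiL Q k B hB i = ⊥) ∧
    ∀ j, x i = some j →
      Nonempty (↥(BeiL Q k B hB i) ≃ₗ[↥(pathAlg Q k)] ↥(Pmod Q k j))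

/-- The subspace `B_x` of `A` associated to a (special) function `x` : the `k`-linear span
of all paths `a_{ts}` with `x s ≠ 0` and `t` a successor of `x s`. -/
def Bspan (x : Fin n → Option (Fin n)) : Submodule k ↥(pathAlg Q k) :=
  Submodule.span k {v | ∃ s xs t, x s = some xs ∧ Q.Reach xs t ∧ v = aEl Q k t s}

/-- The two-sided ideal `J_i`: the span of all paths of `Q` except the trivial path `e_i`. -/
def J (i : Fin n) : Submodule k ↥(pathAlg Q k) :=
  Submodule.span k {v | ∃ t s, Q.Reach s t ∧ ¬(t = i ∧ s = i) ∧ v = aEl Q k t s}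

/-- The indecomposable direct summand `J_s^{(q)}` of `J_s` corresponding to the connected
component (of `Q` with `s` deleted) containing the neighbour `t` of `s`: the span of all
paths `a_{pq}` with `p, q ∈ Γ^{(t)} ∪ {s}` other than `e_s`. -/
def Jc (s t : Fin n) : Submodule k ↥(pathAlg Q k) :=
  Submodule.span k {v | ∃ p q, Q.Reach q p ∧ p ∈ Q.Gamma s t ∪ {s} ∧ q ∈ Q.Gamma s t ∪ {s} ∧
    ¬(p = s ∧ q = s) ∧ v = aEl Q k p q}

end Algebra

section Tensor

open TensorProduct

/-- The multiplication map `I ⊗_k J → A` for two `k`-subspaces `I`, `J` of a `k`-algebra `A`. -/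
noncomputable def mulMap (k A : Type) [CommRing k] [Ring A] [Algebra k A]
    (I J : Submodule k A) : (↥I ⊗[k] ↥J) →ₗ[k] A :=
  TensorProduct.lift (LinearMap.compl₁₂ (LinearMap.mul k A) I.subtype J.subtype)

/-- The submodule of `I ⊗_k J` spanned by the "balancing" relators `ba ⊗ d - b ⊗ ad`;
the quotient of `I ⊗_k J` by it is `I ⊗_A J`, so the multiplication map
`I ⊗_A J → A` is injective if and only if the kernel of `mulMap` equals `balRel`. -/
noncomputable def balRel (k A : Type) [CommRing k] [Ring A] [Algebra k A]
    (I J : Submodule k A) : Submodule k (↥I ⊗[k] ↥J) :=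
  Submodule.span k {z | ∃ (b : I) (d : J) (a : A) (h1 : (b : A) * a ∈ I) (h2 : a * (d : A) ∈ J),
    z = (⟨(b : A) * a, h1⟩ : I) ⊗ₜ[k] d - (b ⊗ₜ[k] (⟨a * (d : A), h2⟩ : J))}

end Tensor

section Aux

variable {n : ℕ}

lemma arr_adj (Q : TreeQuiver n) {i j : Fin n} (h : Q.arr i j) : Q.G.Adj i j := by
  have hne : i ≠ j := fun e => Q.loopless i (e ▸ h)
  exact (SimpleGraph.fromRel_adj Q.arr i j).2 ⟨hne, Or.inl h⟩

lemma reach_walk (Q : TreeQuiver n) {i j : Fin n} (h : Q.Reach i j) :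
    ∃ W : Q.G.Walk i j, ∀ d ∈ W.darts, Q.arr d.toProd.1 d.toProd.2 := by
  induction h using Relation.ReflTransGen.head_induction_on with
  | refl => exact ⟨SimpleGraph.Walk.nil, by simp⟩
  | head h1 h2 ih =>
    obtain ⟨W, hW⟩ := ih
    refine ⟨SimpleGraph.Walk.cons (arr_adj Q h1) W, ?_⟩
    intro d hd
    rcases List.mem_cons.1 hd with h' | h'
    · subst h'; exact h1
    · exact hW d h'

lemma reach_antisymm (Q : TreeQuiver n) {i j : Fin n} (h1 : Q.Reach i j) (h2 : Q.Reach j i) :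
    i = j := by
  by_contra hne
  obtain ⟨W1, hW1⟩ := reach_walk Q h1
  obtain ⟨W2, hW2⟩ := reach_walk Q h2
  have hP1 : W1.bypass.IsPath := SimpleGraph.Walk.bypass_isPath W1
  have hP2 : W2.bypass.IsPath := SimpleGraph.Walk.bypass_isPath W2
  have heq : W1.bypass = W2.bypass.reverse :=
    (Q.isTree.existsUnique_path i j).unique hP1 hP2.reverse
  have hd : W1.bypass.darts ≠ [] := by
    intro h0
    apply hne
    apply SimpleGraph.Walk.eq_of_length_eq_zero (p := W1.bypass)
    rw [← SimpleGraph.Walk.length_darts, h0]; rfl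
  obtain ⟨d, hdmem⟩ := List.exists_mem_of_ne_nil _ hd
  have hf : Q.arr d.toProd.1 d.toProd.2 := hW1 d (SimpleGraph.Walk.darts_bypass_subset W1 hdmem)
  have hdm2 : d ∈ W2.bypass.reverse.darts := heq ▸ hdmem
  have hmem2 : d.symm ∈ W2.bypass.darts := SimpleGraph.Walk.mem_darts_reverse.1 hdm2
  have hb : Q.arr d.toProd.2 d.toProd.1 :=
    hW2 d.symm (SimpleGraph.Walk.darts_bypass_subset W2 hmem2)
  exact Q.oneway _ _ hf hb

lemma exists_sink (Q : TreeQuiver n) (j : Fin n) : ∃ t, Q.IsSink t ∧ Q.Reach j t := by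
  classical
  let m : Fin n → ℕ := fun v => (Finset.univ.filter (fun u => Q.Reach v u)).card
  obtain ⟨t, hts, htm⟩ := Finset.exists_min_image (Finset.univ.filter (fun v => Q.Reach j v)) m
    ⟨j, Finset.mem_filter.2 ⟨Finset.mem_univ _, Relation.ReflTransGen.refl⟩⟩
  have hjt : Q.Reach j t := (Finset.mem_filter.1 hts).2
  refine ⟨t, ?_, hjt⟩
  intro u hu
  have hju : Q.Reach j u := hjt.tail hu
  have hle := htm u (Finset.mem_filter.2 ⟨Finset.mem_univ _, hju⟩)
  have hsub : (Finset.univ.filter (fun x => Q.Reach u x)) ⊆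
      (Finset.univ.filter (fun x => Q.Reach t x)) := by
    intro x hx
    exact Finset.mem_filter.2 ⟨Finset.mem_univ _,
      Relation.ReflTransGen.head hu (Finset.mem_filter.1 hx).2⟩
  have hlt : m u < m t := by
    apply Finset.card_lt_card
    refine (Finset.ssubset_iff_of_subset hsub).2 ⟨t,
      Finset.mem_filter.2 ⟨Finset.mem_univ _, Relation.ReflTransGen.refl⟩, ?_⟩
    intro hmem
    have hut : Q.Reach u t := (Finset.mem_filter.1 hmem).2
    have : u = t := reach_antisymm Q hut (Relation.ReflTransGen.single hu)
    exact Q.loopless t (this ▸ hu)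
  omega

lemma exists_source (Q : TreeQuiver n) (i : Fin n) : ∃ s, Q.IsSource s ∧ Q.Reach s i := by
  classical
  let m : Fin n → ℕ := fun v => (Finset.univ.filter (fun u => Q.Reach u v)).card
  obtain ⟨s, hss, hsm⟩ := Finset.exists_min_image (Finset.univ.filter (fun v => Q.Reach v i)) m
    ⟨i, Finset.mem_filter.2 ⟨Finset.mem_univ _, Relation.ReflTransGen.refl⟩⟩
  have hsi : Q.Reach s i := (Finset.mem_filter.1 hss).2
  refine ⟨s, ?_, hsi⟩
  intro w hw
  have hwi : Q.Reach w i := Relation.ReflTransGen.head hw hsi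
  have hle := hsm w (Finset.mem_filter.2 ⟨Finset.mem_univ _, hwi⟩)
  have hsub : (Finset.univ.filter (fun x => Q.Reach x w)) ⊆
      (Finset.univ.filter (fun x => Q.Reach x s)) := by
    intro x hx
    exact Finset.mem_filter.2 ⟨Finset.mem_univ _, (Finset.mem_filter.1 hx).2.tail hw⟩
  have hlt : m w < m s := by
    apply Finset.card_lt_card
    refine (Finset.ssubset_iff_of_subset hsub).2 ⟨s,
      Finset.mem_filter.2 ⟨Finset.mem_univ _, Relation.ReflTransGen.refl⟩, ?_⟩
    intro hmem
    have hsw : Q.Reach s w := (Finset.mem_filter.1 hmem).2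
    have : s = w := reach_antisymm Q hsw (Relation.ReflTransGen.single hw)
    exact Q.loopless s (this ▸ hw)
  omega

lemma sink_fix (Q : TreeQuiver n) {t i : Fin n} (ht : Q.IsSink t) (h : Q.Reach t i) : i = t := by
  rcases Relation.ReflTransGen.cases_head h with h' | ⟨c, hc, _⟩
  · exact h'.symm
  · exact absurd hc (ht c)

lemma source_fix (Q : TreeQuiver n) {s i : Fin n} (hs : Q.IsSource s) (h : Q.Reach i s) :
    i = s := by
  rcases Relation.ReflTransGen.cases_tail h with h' | ⟨c, _, hc⟩
  · exact h'.symm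
  · exact absurd hc (hs c)

end Aux

section AlgAux

variable {n : ℕ} (Q : TreeQuiver n) (k : Type) [Field k]

lemma aEl_coe {s t : Fin n} (h : Q.Reach s t) :
    ((aEl Q k t s : ↥(pathAlg Q k)) : Matrix (Fin n) (Fin n) k) = Matrix.single t s 1 := by
  unfold aEl
  rw [dif_pos h]

lemma aEl_ne_zero {s t : Fin n} (h : Q.Reach s t) : aEl Q k t s ≠ 0 := by
  intro h0
  have h1 : ((aEl Q k t s : ↥(pathAlg Q k)) : Matrix (Fin n) (Fin n) k) t s = 0 := by
    rw [h0]; rfl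
  rw [aEl_coe Q k h] at h1
  simp at h1

lemma e_coe (i : Fin n) :
    ((e Q k i : ↥(pathAlg Q k)) : Matrix (Fin n) (Fin n) k) = Matrix.single i i 1 := rfl

lemma corner (M : Matrix (Fin n) (Fin n) k) (j i : Fin n) :
    Matrix.single j j (1 : k) * M * Matrix.single i i 1
      = M j i • Matrix.single j i 1 := by
  ext a b
  by_cases hb : b = i
  · subst hb
    by_cases ha : a = j
    · subst ha
      rw [Matrix.mul_single_apply_same, Matrix.single_mul_apply_same]
      simp [Matrix.single]
    · rw [Matrix.mul_single_apply_same,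
        Matrix.single_mul_apply_of_ne _ _ _ _ _ ha]
      simp [Matrix.single, Ne.symm ha]
  · rw [Matrix.mul_single_apply_of_ne _ _ _ _ _ hb]
    simp [Matrix.single, Ne.symm hb]

lemma mul_aEl_coe {s t : Fin n} (ht : Q.IsSink t) (M : Matrix (Fin n) (Fin n) k)
    (hM : M ∈ pathAlg Q k) :
    M * Matrix.single t s (1 : k) = M t t • Matrix.single t s 1 := by
  ext a b
  by_cases hb : b = s
  · subst hb
    rw [Matrix.mul_single_apply_same]
    by_cases ha : a = t
    · subst ha; simp [Matrix.single]
    · have h0 : M a t = 0 := hM a t fun hr => ha (sink_fix Q ht hr)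
      simp [h0, Matrix.single, Ne.symm ha]
  · rw [Matrix.mul_single_apply_of_ne _ _ _ _ _ hb]
    simp [Matrix.single, Ne.symm hb]

lemma aEl_mul_coe {s t : Fin n} (hs : Q.IsSource s) (M : Matrix (Fin n) (Fin n) k)
    (hM : M ∈ pathAlg Q k) :
    Matrix.single t s (1 : k) * M = M s s • Matrix.single t s 1 := by
  ext a b
  by_cases ha : a = t
  · subst ha
    rw [Matrix.single_mul_apply_same]
    by_cases hb : b = s
    · subst hb; simp [Matrix.single]
    · have h0 : M s b = 0 := hM s b fun hr => hb (source_fix Q hs hr)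
      simp [h0, Matrix.single, Ne.symm hb]
  · rw [Matrix.single_mul_apply_of_ne _ _ _ _ _ ha]
    simp [Matrix.single, Ne.symm ha]

lemma chain_target {s t : Fin n} (hmc : Q.IsMaxChain s t) :
    IsIdeal Q k (Submodule.span k {aEl Q k t s}) ∧ (Submodule.span k {aEl Q k t s}) ≠ ⊥ ∧
      ∀ T : Submodule k ↥(pathAlg Q k), IsIdeal Q k T → T ≤ Submodule.span k {aEl Q k t s} →
        T = ⊥ ∨ T = Submodule.span k {aEl Q k t s} := by
  obtain ⟨hs, ht, hr⟩ := hmc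
  have hvcoe := aEl_coe Q k hr
  have hv0 := aEl_ne_zero Q k hr
  refine ⟨⟨?_, ?_⟩, ?_, ?_⟩
  · intro a x hx
    obtain ⟨c, rfl⟩ := Submodule.mem_span_singleton.1 hx
    rw [mul_smul_comm]
    apply Submodule.smul_mem
    have hav : a * aEl Q k t s = ((a : Matrix (Fin n) (Fin n) k) t t) • aEl Q k t s := by
      apply Subtype.ext
      rw [MulMemClass.coe_mul, SetLike.val_smul, hvcoe]
      exact mul_aEl_coe Q k ht _ a.2
    rw [hav]
    exact Submodule.smul_mem _ _ (Submodule.mem_span_singleton_self _)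
  · intro a x hx
    obtain ⟨c, rfl⟩ := Submodule.mem_span_singleton.1 hx
    rw [smul_mul_assoc]
    apply Submodule.smul_mem
    have hav : aEl Q k t s * a = ((a : Matrix (Fin n) (Fin n) k) s s) • aEl Q k t s := by
      apply Subtype.ext
      rw [MulMemClass.coe_mul, SetLike.val_smul, hvcoe]
      exact aEl_mul_coe Q k hs _ a.2
    rw [hav]
    exact Submodule.smul_mem _ _ (Submodule.mem_span_singleton_self _)
  · simpa [Submodule.span_singleton_eq_bot] using hv0
  · intro T _ hle
    by_cases hT : T = ⊥
    · exact Or.inl hT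
    · right
      obtain ⟨x, hxT, hx0⟩ := Submodule.ne_bot_iff T |>.1 hT
      obtain ⟨c, hc⟩ := Submodule.mem_span_singleton.1 (hle hxT)
      have hc0 : c ≠ 0 := by rintro rfl; rw [zero_smul] at hc; exact hx0 hc.symm
      have hvT : aEl Q k t s ∈ T := by
        have : aEl Q k t s = c⁻¹ • x := by rw [← hc, smul_smul, inv_mul_cancel₀ hc0, one_smul]
        rw [this]
        exact Submodule.smul_mem _ _ hxT
      exact le_antisymm hle ((Submodule.span_singleton_le_iff_mem _ _).2 hvT)

end AlgAux

/-- The map sending a maximal chain (with source `s` and sink `t`) of `Q` to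
the one-dimensional subspace of `A` spanned by the path `a_{ts}` is a bijection from the
set of maximal chains of `Q` onto the set of simple sub-bimodules of `A` (equivalently,
the minimal nonzero two-sided ideals of `A`); these are exactly the simple sub-bimodules
in the socle of the bimodule `A`. -/
theorem statement8 {n : ℕ} (k : Type) [Field k] [IsAlgClosed k] (hn : 1 < n)
    (Q : TreeQuiver n) (hadm : Q.Admissible) (hK' : ∃ s, Q.inK' s) :
    Set.BijOn (fun c : Fin n × Fin n => Submodule.span k {aEl Q k c.2 c.1})
      {c : Fin n × Fin n | Q.IsMaxChain c.1 c.2}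
      {S : Submodule k ↥(pathAlg Q k) | IsIdeal Q k S ∧ S ≠ ⊥ ∧
        ∀ T : Submodule k ↥(pathAlg Q k), IsIdeal Q k T → T ≤ S → T = ⊥ ∨ T = S} := by
  refine ⟨?_, ?_, ?_⟩
  · intro c hc
    exact chain_target Q k hc
  · intro c1 h1 c2 h2 heq
    obtain ⟨hs1, ht1, hr1⟩ := h1
    obtain ⟨hs2, ht2, hr2⟩ := h2
    have hmem : aEl Q k c1.2 c1.1 ∈ Submodule.span k {aEl Q k c2.2 c2.1} := by
      rw [show Submodule.span k {aEl Q k c2.2 c2.1}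
          = Submodule.span k {aEl Q k c1.2 c1.1} from heq.symm]
      exact Submodule.mem_span_singleton_self _
    obtain ⟨c, hc⟩ := Submodule.mem_span_singleton.1 hmem
    have hco := congrArg
      (fun z : ↥(pathAlg Q k) => (z : Matrix (Fin n) (Fin n) k) c1.2 c1.1) hc
    simp only [SetLike.val_smul, Matrix.smul_apply, aEl_coe Q k hr1, aEl_coe Q k hr2] at hco
    by_cases h2eq : c2.2 = c1.2 ∧ c2.1 = c1.1
    · exact Prod.ext h2eq.2.symm h2eq.1.symm
    · exfalso
      have hz : (Matrix.single c2.2 c2.1 (1 : k)) c1.2 c1.1 = 0 := by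
        simp only [Matrix.single, Matrix.of_apply, if_neg h2eq]
      have ho : (Matrix.single c1.2 c1.1 (1 : k)) c1.2 c1.1 = 1 := by
        simp [Matrix.single]
      rw [hz, ho, smul_zero] at hco
      exact zero_ne_one hco
  · rintro S ⟨hS, hSne, hSmin⟩
    obtain ⟨x, hxS, hx0⟩ := (Submodule.ne_bot_iff S).1 hSne
    have hx0' : ∃ j i, (x : Matrix (Fin n) (Fin n) k) j i ≠ 0 := by
      by_contra hcon
      push_neg at hcon
      apply hx0
      apply Subtype.ext
      ext a b
      exact hcon a b
    obtain ⟨j, i, hji⟩ := hx0'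
    have hij : Q.Reach i j := by
      by_contra hcon
      exact hji (x.2 j i hcon)
    have hEji : (⟨Matrix.single j i 1, std_mem Q k j i hij⟩ : ↥(pathAlg Q k)) ∈ S := by
      have hu : e Q k j * x * e Q k i ∈ S := hS.2 (e Q k i) _ (hS.1 (e Q k j) x hxS)
      have hval : e Q k j * x * e Q k i
          = ((x : Matrix (Fin n) (Fin n) k) j i) •
            (⟨Matrix.single j i 1, std_mem Q k j i hij⟩ : ↥(pathAlg Q k)) := by
        apply Subtype.ext
        rw [MulMemClass.coe_mul, MulMemClass.coe_mul, SetLike.val_smul, e_coe, e_coe]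
        exact corner k x.1 j i
      have hsm := S.smul_mem ((x : Matrix (Fin n) (Fin n) k) j i)⁻¹ hu
      rwa [hval, smul_smul, inv_mul_cancel₀ hji, one_smul] at hsm
    obtain ⟨t, htsink, hjt⟩ := exists_sink Q j
    obtain ⟨s, hssource, hsi⟩ := exists_source Q i
    have hit : Q.Reach i t := hij.trans hjt
    have hst : Q.Reach s t := hsi.trans hit
    have hEti : (⟨Matrix.single t i 1, std_mem Q k t i hit⟩ : ↥(pathAlg Q k)) ∈ S := by
      have hm := hS.1 ⟨Matrix.single t j 1, std_mem Q k t j hjt⟩ _ hEji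
      have hval : (⟨Matrix.single t j 1, std_mem Q k t j hjt⟩ : ↥(pathAlg Q k)) *
          ⟨Matrix.single j i 1, std_mem Q k j i hij⟩
          = ⟨Matrix.single t i 1, std_mem Q k t i hit⟩ := by
        apply Subtype.ext
        rw [MulMemClass.coe_mul]
        simp
      rwa [hval] at hm
    have hEts : (⟨Matrix.single t s 1, std_mem Q k t s hst⟩ : ↥(pathAlg Q k)) ∈ S := by
      have hm := hS.2 ⟨Matrix.single i s 1, std_mem Q k i s hsi⟩ _ hEti
      have hval : (⟨Matrix.single t i 1, std_mem Q k t i hit⟩ : ↥(pathAlg Q k)) *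
          ⟨Matrix.single i s 1, std_mem Q k i s hsi⟩
          = ⟨Matrix.single t s 1, std_mem Q k t s hst⟩ := by
        apply Subtype.ext
        rw [MulMemClass.coe_mul]
        simp
      rwa [hval] at hm
    have hmc : Q.IsMaxChain s t := ⟨hssource, htsink, hst⟩
    refine ⟨(s, t), hmc, ?_⟩
    have haEl : aEl Q k t s = ⟨Matrix.single t s 1, std_mem Q k t s hst⟩ :=
      Subtype.ext (aEl_coe Q k hst)
    have hle : Submodule.span k {aEl Q k t s} ≤ S := by
      rw [Submodule.span_le, Set.singleton_subset_iff]
      rw [haEl]; exact hEts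
    rcases hSmin _ (chain_target Q k hmc).1 hle with hbot | hself
    · exact absurd hbot (chain_target Q k hmc).2.1
    · exact hself

end DPF
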